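/- Let P(x) = R(x) - q with R monic of degree n ≥ 2, R(0) = 0, and suppose all roots of R are simple. Then the polynomial U(x) = D(R(x))/(R'(x))^2 satisfies U(0) ≠ 0, where D(q) = disc_x(P(x)). -/

import Mathlib

open Polynomial

/-- The Sylvester matrix of `f` (of degree at most `m`) and `g` (of degree at most `n`). -/
noncomputable def sylvester {R : Type*} [CommRing R] (m n : ℕ) (f g : R[X]) :
    Matrix (Fin (m + n)) (Fin (m + n)) R :=
  Matrix.of fun i j =>
    if (i : ℕ) < n then
      (if (i : ℕ) ≤ (j : ℕ) ∧ (j : ℕ) ≤ (i : ℕ) + m then f.coeff (m + i - j) else 0)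
    else
      (if (i : ℕ) - n ≤ (j : ℕ) ∧ (j : ℕ) ≤ (i : ℕ) then g.coeff ((i : ℕ) - (j : ℕ)) else 0)

/-- The resultant of `f` (degree `m`) and `g` (degree `n`). -/
noncomputable def resultant {R : Type*} [CommRing R] (m n : ℕ) (f g : R[X]) : R :=
  (sylvester m n f g).det

/-- The discriminant of a monic polynomial `f` of degree `n`. -/
noncomputable def discMonic {R : Type*} [CommRing R] (n : ℕ) (f : R[X]) : R :=
  (-1 : R) ^ (n * (n - 1) / 2) * resultant n (n - 1) f (derivative f)

theorem sylvester_eq_coeff' {K : Type*} [Field K] (m n' : ℕ) (f g : K[X])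
    (hf : f.natDegree ≤ m) (hg : g.natDegree ≤ n') (i j : Fin (m + n')) :
    sylvester m n' f g i j =
      (if (i : ℕ) < n' then f * X ^ (n' - 1 - (i : ℕ)) else g * X ^ (m + n' - 1 - (i : ℕ))).coeff
        (m + n' - 1 - (j : ℕ)) := by
  have hi := i.isLt
  have hj := j.isLt
  simp only [_root_.sylvester, Matrix.of_apply]
  by_cases hin : (i : ℕ) < n'
  · rw [if_pos hin, if_pos hin, coeff_mul_X_pow']
    by_cases hcond : (i : ℕ) ≤ (j : ℕ) ∧ (j : ℕ) ≤ (i : ℕ) + m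
    · rw [if_pos hcond, if_pos (by omega)]
      congr 1
      omega
    · rw [if_neg hcond]
      by_cases hle : n' - 1 - (i : ℕ) ≤ m + n' - 1 - (j : ℕ)
      · rw [if_pos hle]
        symm
        apply coeff_eq_zero_of_natDegree_lt
        omega
      · rw [if_neg hle]
  · rw [if_neg hin, if_neg hin, coeff_mul_X_pow']
    by_cases hcond : (i : ℕ) - n' ≤ (j : ℕ) ∧ (j : ℕ) ≤ (i : ℕ)
    · rw [if_pos hcond, if_pos (by omega)]
      congr 1
      omega
    · rw [if_neg hcond]
      by_cases hle : m + n' - 1 - (i : ℕ) ≤ m + n' - 1 - (j : ℕ)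
      · rw [if_pos hle]
        symm
        apply coeff_eq_zero_of_natDegree_lt
        omega
      · rw [if_neg hle]

theorem det_sylvester_ne_zero' {K : Type*} [Field K] (m n' : ℕ) (hm : 1 ≤ m) (f g : K[X])
    (hfm : f.natDegree = m) (hf0 : f ≠ 0) (hg : g.natDegree ≤ n') (hcop : IsCoprime f g) :
    (sylvester m n' f g).det ≠ 0 := by
  intro hdet
  obtain ⟨v, hv0, hv⟩ := Matrix.exists_vecMul_eq_zero_iff.mpr hdet
  set a : K[X] :=
    ∑ i : Fin (m + n'), if (i : ℕ) < n' then C (v i) * X ^ (n' - 1 - (i : ℕ)) else 0 with ha_def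
  set b : K[X] :=
    ∑ i : Fin (m + n'), if (i : ℕ) < n' then 0 else C (v i) * X ^ (m + n' - 1 - (i : ℕ))
    with hb_def
  have hP : a * f + b * g = ∑ i : Fin (m + n'), C (v i) *
      (if (i : ℕ) < n' then f * X ^ (n' - 1 - (i : ℕ))
       else g * X ^ (m + n' - 1 - (i : ℕ))) := by
    rw [ha_def, hb_def, Finset.sum_mul, Finset.sum_mul, ← Finset.sum_add_distrib]
    refine Finset.sum_congr rfl fun i _ => ?_
    by_cases hi : (i : ℕ) < n' <;> simp only [hi, if_pos, if_neg, if_true, if_false,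
      zero_mul, add_zero, zero_add, ite_true, ite_false] <;> ring
  have key : a * f + b * g = 0 := by
    rw [hP]
    refine Polynomial.ext fun k => ?_
    rw [coeff_zero, finset_sum_coeff]
    simp only [coeff_C_mul]
    by_cases hk : k < m + n'
    · set j : Fin (m + n') := ⟨m + n' - 1 - k, by omega⟩ with hj_def
      have hk' : m + n' - 1 - (j : ℕ) = k := by
        simp only [hj_def]
        omega
      have : ∀ i : Fin (m + n'),
          (if (i : ℕ) < n' then f * X ^ (n' - 1 - (i : ℕ))
           else g * X ^ (m + n' - 1 - (i : ℕ))).coeff k = sylvester m n' f g i j := by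
        intro i
        rw [sylvester_eq_coeff' m n' f g hfm.le hg i j, hk']
      simp_rw [this]
      have := congrFun hv j
      simpa [Matrix.vecMul, dotProduct] using this
    · apply Finset.sum_eq_zero
      intro i _
      have hcz : (if (i : ℕ) < n' then f * X ^ (n' - 1 - (i : ℕ))
          else g * X ^ (m + n' - 1 - (i : ℕ))).coeff k = 0 := by
        apply coeff_eq_zero_of_natDegree_lt
        have hi := i.isLt
        split_ifs with hi'
        · calc (f * X ^ (n' - 1 - (i : ℕ))).natDegree
              ≤ f.natDegree + (X ^ (n' - 1 - (i : ℕ)) : K[X]).natDegree := natDegree_mul_le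
            _ = f.natDegree + (n' - 1 - (i : ℕ)) := by rw [natDegree_X_pow]
            _ < k := by omega
        · calc (g * X ^ (m + n' - 1 - (i : ℕ))).natDegree
              ≤ g.natDegree + (X ^ (m + n' - 1 - (i : ℕ)) : K[X]).natDegree := natDegree_mul_le
            _ = g.natDegree + (m + n' - 1 - (i : ℕ)) := by rw [natDegree_X_pow]
            _ < k := by omega
      rw [hcz, mul_zero]
  have hfb : f ∣ b := by
    refine hcop.dvd_of_dvd_mul_right ⟨-a, ?_⟩
    linear_combination key
  have hb : b = 0 := by
    by_contra hb0
    have h1 : f.natDegree ≤ b.natDegree := natDegree_le_of_dvd hfb hb0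
    have h2 : b.natDegree ≤ m - 1 := by
      rw [hb_def]
      refine natDegree_sum_le_of_forall_le _ _ fun i _ => ?_
      split_ifs with hi
      · simp
      · calc (C (v i) * X ^ (m + n' - 1 - (i : ℕ))).natDegree
            ≤ (X ^ (m + n' - 1 - (i : ℕ)) : K[X]).natDegree := natDegree_C_mul_le _ _
          _ = m + n' - 1 - (i : ℕ) := natDegree_X_pow _
          _ ≤ m - 1 := by omega
    omega
  have ha : a = 0 := by
    rw [hb, zero_mul, add_zero] at key
    rcases mul_eq_zero.mp key with h | h
    · exact h
    · exact absurd h hf0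
  apply hv0
  funext i
  by_cases hi : (i : ℕ) < n'
  · have h1 : a.coeff (n' - 1 - (i : ℕ)) = v i := by
      rw [ha_def, finset_sum_coeff]
      rw [Finset.sum_eq_single i]
      · rw [if_pos hi, coeff_C_mul, coeff_X_pow, if_pos rfl, mul_one]
      · intro i' _ hne
        by_cases hi' : (i' : ℕ) < n'
        · rw [if_pos hi', coeff_C_mul, coeff_X_pow, if_neg, mul_zero]
          have : (i : ℕ) ≠ (i' : ℕ) := fun h => hne (Fin.ext h.symm)
          omega
        · rw [if_neg hi', coeff_zero]
      · intro h
        exact absurd (Finset.mem_univ i) h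
    rw [ha, coeff_zero] at h1
    exact h1.symm
  · have hiN := i.isLt
    have h1 : b.coeff (m + n' - 1 - (i : ℕ)) = v i := by
      rw [hb_def, finset_sum_coeff]
      rw [Finset.sum_eq_single i]
      · rw [if_neg hi, coeff_C_mul, coeff_X_pow, if_pos rfl, mul_one]
      · intro i' _ hne
        by_cases hi' : (i' : ℕ) < n'
        · rw [if_pos hi', coeff_zero]
        · rw [if_neg hi', coeff_C_mul, coeff_X_pow, if_neg, mul_zero]
          have : (i : ℕ) ≠ (i' : ℕ) := fun h => hne (Fin.ext h.symm)
          have := i'.isLt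
          omega
      · intro h
        exact absurd (Finset.mem_univ i) h
    rw [hb, coeff_zero] at h1
    exact h1.symm

theorem sylvester_map' {A B : Type*} [CommRing A] [CommRing B] (φ : A →+* B) (m n : ℕ)
    (f g : A[X]) : (sylvester m n f g).map φ = sylvester m n (f.map φ) (g.map φ) := by
  ext i j
  simp only [_root_.sylvester, Matrix.map_apply, Matrix.of_apply, apply_ite φ, map_zero, coeff_map]

theorem discMonic_map' {A B : Type*} [CommRing A] [CommRing B] (φ : A →+* B) (n : ℕ)
    (f : A[X]) : φ (discMonic n f) = discMonic n (f.map φ) := by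
  rw [discMonic, discMonic, _root_.resultant, _root_.resultant, map_mul, map_pow, map_neg, map_one,
    RingHom.map_det, RingHom.mapMatrix_apply, sylvester_map', derivative_map]

/-- if moreover all (complex) roots of `R` are simple, then the polynomial
`U(x) = D(R(x))/(R'(x))^2` satisfies `U(0) ≠ 0`. -/
theorem stmt1 (n : ℕ) (hn : 2 ≤ n) (R : ℝ[X]) (hmonic : R.Monic) (hdeg : R.natDegree = n)
    (h0 : R.eval 0 = 0)
    (hsimple : (R.map (algebraMap ℝ ℂ)).roots.Nodup)
    (D : ℝ[X]) (hD : D = discMonic n (R.map (C : ℝ →+* ℝ[X]) - C X))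
    (U : ℝ[X]) (hU : D.comp R = (derivative R) ^ 2 * U) :
    U.eval 0 ≠ 0 := by
  -- Step 1: R is separable (hence coprime with its derivative)
  have hsep : R.Separable :=
    (Polynomial.nodup_aroots_iff_of_splits hmonic.ne_zero
      (IsAlgClosed.splits (R.map (algebraMap ℝ ℂ)))).mp hsimple
  -- Step 2: D.eval 0 = discMonic n R
  have hmap : ((R.map (C : ℝ →+* ℝ[X]) - C X).map (evalRingHom (0 : ℝ))) = R := by
    rw [Polynomial.map_sub, Polynomial.map_map, map_C]
    simp only [coe_evalRingHom, eval_X, C_0, sub_zero]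
    have h : (evalRingHom (0 : ℝ)).comp (C : ℝ →+* ℝ[X]) = RingHom.id ℝ := by
      ext r
      simp
    rw [h, Polynomial.map_id]
  have hD0 : D.eval 0 = discMonic n R := by
    have := discMonic_map' (evalRingHom (0 : ℝ)) n (R.map (C : ℝ →+* ℝ[X]) - C X)
    rw [hmap] at this
    rw [hD]
    exact this
  -- Step 3: discMonic n R ≠ 0
  have hdisc : discMonic n R ≠ 0 := by
    rw [discMonic, _root_.resultant]
    apply mul_ne_zero
    · exact pow_ne_zero _ (by norm_num)
    · exact det_sylvester_ne_zero' n (n - 1) (by omega) R (derivative R) hdeg hmonic.ne_zero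
        (by have := natDegree_derivative_le R; omega) hsep
  -- Step 4: conclude
  intro hU0
  have heval : (D.comp R).eval 0 = ((derivative R) ^ 2 * U).eval 0 := by rw [hU]
  rw [eval_comp, h0, eval_mul, eval_pow, hU0, mul_zero, hD0] at heval
  exact hdisc heval
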